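/- Let 0 < α < 1, let v_1, …, v_n ∈ R^d be unit vectors with ⟨v_i, v_j⟩ = ±α for all i ≠ j, and let G be the graph on {1, …, n} with an edge ij whenever ⟨v_i, v_j⟩ = −α. Set λ = (1−α)/(2α). Then the adjacency matrix of G has at most one eigenvalue (counted with multiplicity) strictly greater than λ. -/

import Mathlib

open scoped RealInnerProductSpace

open Matrix

attribute [local instance] Classical.propDecidable

/-- The adjacency matrix of a finite simple graph, with real entries. -/
noncomputable def adjMat {V : Type*} [Fintype V] (G : SimpleGraph V) : Matrix V V ℝ :=
  Matrix.of fun a b => if G.Adj a b then 1 else 0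

lemma adjMat_isHermitian {V : Type*} [Fintype V] (G : SimpleGraph V) :
    (adjMat G).IsHermitian := by
  show (adjMat G)ᴴ = adjMat G
  ext i j
  simp only [adjMat, Matrix.conjTranspose_apply, Matrix.of_apply, star_trivial]
  rw [SimpleGraph.adj_comm]

/-- The `k`-th largest eigenvalue (`1`-indexed, counted with multiplicity) of the
adjacency matrix of a finite simple graph. -/
noncomputable def graphEigNth {V : Type*} [Fintype V] (G : SimpleGraph V) (k : ℕ) : ℝ :=
  ((Finset.univ.val.map (adjMat_isHermitian G).eigenvalues).sort (· ≤ ·)).getD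
    (Fintype.card V - k) 0

/-- **At most one eigenvalue above `λ`.** Let `0 < α < 1`, let `v 1, …, v n` be unit
vectors in `ℝ^d` with pairwise inner products `±α`, and let `G` be the graph on
`{1, …, n}` with an edge `ij` exactly when `⟪v i, v j⟫ = −α`. Then the adjacency matrix
of `G` has at most one eigenvalue (with multiplicity) strictly greater than
`λ = (1−α)/(2α)`. -/
theorem at_most_one_eigenvalue_above (α : ℝ) (hα0 : 0 < α) (hα1 : α < 1)
    (n d : ℕ) (v : Fin n → EuclideanSpace ℝ (Fin d))
    (hunit : ∀ i, ‖v i‖ = 1)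
    (hangle : ∀ i j, i ≠ j → ⟪v i, v j⟫ = α ∨ ⟪v i, v j⟫ = -α)
    (G : SimpleGraph (Fin n))
    (hG : ∀ i j, G.Adj i j ↔ i ≠ j ∧ ⟪v i, v j⟫ = -α) :
    Nat.card {i : Fin n //
      (1 - α) / (2 * α) < (adjMat_isHermitian G).eigenvalues i} ≤ 1 := by
  have hA := adjMat_isHermitian G
  set lam : ℝ := (1 - α) / (2 * α) with hlam
  -- pointwise formula for inner products
  have hc : ∀ i j, ⟪v i, v j⟫ = (1 - α) * (if i = j then 1 else 0) - 2 * α * adjMat G i j + α := by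
    intro i j
    by_cases h : i = j
    · subst h
      have h1 : ⟪v i, v i⟫ = 1 := by
        rw [real_inner_self_eq_norm_sq, hunit i]; norm_num
      simp [adjMat, h1, hunit i]
      try ring
    · by_cases hadj : G.Adj i j
      · have h2 : ⟪v i, v j⟫ = -α := ((hG i j).1 hadj).2
        simp [adjMat, hadj, h, h2]; try ring
      · have h2 : ⟪v i, v j⟫ = α := by
          rcases hangle i j h with h' | h'
          · exact h'
          · exact absurd ((hG i j).2 ⟨h, h'⟩) hadj
        simp [adjMat, hadj, h, h2]; try ring
  -- Gram matrix positivity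
  have hgram : ∀ x : Fin n → ℝ, 0 ≤ ∑ i, ∑ j, x i * x j * ⟪v i, v j⟫ := by
    intro x
    have h1 : (∑ i, ∑ j, x i * x j * ⟪v i, v j⟫)
        = ⟪∑ i, x i • v i, ∑ i, x i • v i⟫ := by
      rw [sum_inner]
      refine Finset.sum_congr rfl fun i _ => ?_
      rw [real_inner_smul_left, inner_sum, Finset.mul_sum]
      refine Finset.sum_congr rfl fun j _ => ?_
      rw [real_inner_smul_right]; ring
    rw [h1]
    exact real_inner_self_nonneg
  -- quadratic form bound
  have key : ∀ x : Fin n → ℝ, (∑ i, x i) = 0 →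
      (∑ i, ∑ j, x i * (adjMat G i j * x j)) ≤ lam * (∑ i, x i * x i) := by
    intro x hx
    have hexp : (∑ i, ∑ j, x i * x j * ⟪v i, v j⟫)
        = (1 - α) * (∑ i, x i * x i)
          - 2 * α * (∑ i, ∑ j, x i * (adjMat G i j * x j))
          + α * ((∑ i, x i) * (∑ i, x i)) := by
      have step1 : (∑ i, ∑ j, x i * x j * ⟪v i, v j⟫)
          = ∑ i, ∑ j, ((1 - α) * (if i = j then x i * x j else 0)
              - 2 * α * (x i * (adjMat G i j * x j)) + α * (x i * x j)) := by
        refine Finset.sum_congr rfl fun i _ => Finset.sum_congr rfl fun j _ => ?_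
        rw [hc i j]
        by_cases h : i = j <;> simp [h] <;> ring
      rw [step1]
      rw [Finset.sum_mul_sum]
      simp only [Finset.sum_add_distrib, Finset.sum_sub_distrib, ← Finset.mul_sum,
        Finset.sum_ite_eq, Finset.mem_univ, if_true]
    have h0 := hgram x
    rw [hexp, hx] at h0
    have h2α : (0:ℝ) < 2 * α := by linarith
    rw [hlam, div_mul_eq_mul_div, le_div_iff₀ h2α]
    nlinarith
  suffices hsub : Subsingleton {i : Fin n // lam < hA.eigenvalues i} by
    rcases isEmpty_or_nonempty {i : Fin n // lam < hA.eigenvalues i} with h | h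
    · simp [Nat.card_of_isEmpty]
    · exact le_of_eq (Nat.card_eq_one_iff_unique.mpr ⟨hsub, h⟩)
  constructor
  rintro ⟨i₁, h₁⟩ ⟨i₂, h₂⟩
  by_contra hne'
  have hne : i₁ ≠ i₂ := fun h => hne' (Subtype.ext h)
  set u := hA.eigenvectorBasis with hu
  set μ := hA.eigenvalues with hμ
  have horth : ∀ k l, (∑ t, u k t * u l t) = if k = l then 1 else 0 := by
    intro k l
    have := (orthonormal_iff_ite.mp u.orthonormal) k l
    simpa [PiLp.inner_apply, RCLike.inner_apply, conj_trivial, mul_comm] using this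
  have hmv : ∀ k, ∀ i, (∑ j, adjMat G i j * u k j) = μ k * u k i := by
    intro k i
    have := congrFun (hA.mulVec_eigenvectorBasis k) i
    simpa [Matrix.mulVec, dotProduct] using this
  -- choose coefficients
  set s₁ : ℝ := ∑ t, u i₁ t with hs₁
  set s₂ : ℝ := ∑ t, u i₂ t with hs₂
  obtain ⟨a, b, hab0, habs⟩ : ∃ a b : ℝ, (a ≠ 0 ∨ b ≠ 0) ∧ a * s₁ + b * s₂ = 0 := by
    by_cases h : s₁ = 0
    · exact ⟨1, 0, Or.inl one_ne_zero, by simp [h]⟩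
    · exact ⟨s₂, -s₁, Or.inr (by simpa using h), by ring⟩
  set x : Fin n → ℝ := fun t => a * u i₁ t + b * u i₂ t with hx
  have hsum : (∑ t, x t) = 0 := by
    simp only [hx, Finset.sum_add_distrib, ← Finset.mul_sum, ← hs₁, ← hs₂]
    exact habs
  have hS : (∑ t, x t * x t) = a * a + b * b := by
    have : ∀ t, x t * x t = a * a * (u i₁ t * u i₁ t) + b * b * (u i₂ t * u i₂ t)
        + (a * b) * (u i₁ t * u i₂ t) + (a * b) * (u i₂ t * u i₁ t) := by
      intro t; simp only [hx]; ring
    rw [Finset.sum_congr rfl fun t _ => this t]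
    simp only [Finset.sum_add_distrib, ← Finset.mul_sum, horth, hne, if_true,
      if_false, Ne.symm hne]
    ring
  have hQ : (∑ i, ∑ j, x i * (adjMat G i j * x j)) = a * a * μ i₁ + b * b * μ i₂ := by
    have hin : ∀ i, (∑ j, adjMat G i j * x j) = a * (μ i₁ * u i₁ i) + b * (μ i₂ * u i₂ i) := by
      intro i
      have : ∀ j, adjMat G i j * x j
          = a * (adjMat G i j * u i₁ j) + b * (adjMat G i j * u i₂ j) := by
        intro j; simp only [hx]; ring
      rw [Finset.sum_congr rfl fun j _ => this j]
      simp only [Finset.sum_add_distrib, ← Finset.mul_sum, hmv]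
    rw [Finset.sum_congr rfl fun i _ => by rw [← Finset.mul_sum, hin i]]
    have : ∀ i, x i * (a * (μ i₁ * u i₁ i) + b * (μ i₂ * u i₂ i))
        = a * a * μ i₁ * (u i₁ i * u i₁ i) + b * b * μ i₂ * (u i₂ i * u i₂ i)
          + (a * b * μ i₂) * (u i₁ i * u i₂ i) + (a * b * μ i₁) * (u i₂ i * u i₁ i) := by
      intro i; simp only [hx]; ring
    rw [Finset.sum_congr rfl fun i _ => this i]
    simp only [Finset.sum_add_distrib, ← Finset.mul_sum, horth, hne, if_true,
      if_false, Ne.symm hne]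
    ring
  have hk := key x hsum
  rw [hQ, hS] at hk
  have ha2 : 0 ≤ a * a := mul_self_nonneg a
  have hb2 : 0 ≤ b * b := mul_self_nonneg b
  have habpos : 0 < a * a + b * b := by
    rcases hab0 with h | h
    · have : 0 < a * a := mul_self_pos.mpr h; linarith
    · have : 0 < b * b := mul_self_pos.mpr h; linarith
  have hring : lam * (a * a + b * b) = a * a * lam + b * b * lam := by ring
  rcases hab0 with h | h
  · have h3 := mul_lt_mul_of_pos_left h₁ (mul_self_pos.mpr h)
    have h4 := mul_le_mul_of_nonneg_left h₂.le hb2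
    linarith
  · have h3 := mul_lt_mul_of_pos_left h₂ (mul_self_pos.mpr h)
    have h4 := mul_le_mul_of_nonneg_left h₁.le ha2
    linarith
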